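/- Let w ≥ 4 be an even integer and λ a real number. The unique sequence a : ℕ → ℝ with a(0) = λ satisfying the non-homogeneous min-sum recursion a(ℓ) = −(w/2 − 1)·a(ℓ−1) + λ for all ℓ ≥ 1 is given in closed form by a(ℓ) = (2λ/w)·(1 + (w/2 − 1)·(1 − w/2)^ℓ). Moreover, if w ≥ 6 and λ > 0, then for all ℓ ≥ 1 the sign of a(ℓ) equals (−1)^ℓ, so the messages still oscillate at every iteration. -/

import Mathlib

/-- The unique solution of the non-homogeneous min-sum recursion
`a(ℓ) = -(w/2 - 1)·a(ℓ-1) + λ`, `a(0) = λ`, has closed form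
`a(ℓ) = (2λ/w)·(1 + (w/2 - 1)·(1 - w/2)^ℓ)`; and if `w ≥ 6` and `λ > 0` then the sign of
`a(ℓ)` equals `(-1)^ℓ` for all `ℓ ≥ 1`, so the messages still oscillate at every iteration. -/
theorem stmt_4 (w : ℕ) (hw : 4 ≤ w) (hweven : Even w) (lam : ℝ)
    (a : ℕ → ℝ) (h0 : a 0 = lam)
    (hrec : ∀ ℓ : ℕ, 1 ≤ ℓ → a ℓ = -((w : ℝ) / 2 - 1) * a (ℓ - 1) + lam) :
    (∀ ℓ : ℕ, a ℓ = (2 * lam / (w : ℝ)) * (1 + ((w : ℝ) / 2 - 1) * (1 - (w : ℝ) / 2) ^ ℓ)) ∧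
    (6 ≤ w → 0 < lam → ∀ ℓ : ℕ, 1 ≤ ℓ → Real.sign (a ℓ) = (-1 : ℝ) ^ ℓ) := by
  have hwpos : (0:ℝ) < (w:ℝ) := by
    have : (4:ℝ) ≤ (w:ℝ) := by exact_mod_cast hw
    linarith
  have hw0 : (w:ℝ) ≠ 0 := ne_of_gt hwpos
  have key : ∀ ℓ : ℕ, a ℓ = (2 * lam / (w : ℝ)) *
      (1 + ((w : ℝ) / 2 - 1) * (1 - (w : ℝ) / 2) ^ ℓ) := by
    intro ℓ
    induction ℓ with
    | zero =>
      rw [h0]; field_simp; ring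
    | succ n ih =>
      have h := hrec (n+1) (by omega)
      simp only [Nat.add_sub_cancel] at h
      rw [h, ih]
      field_simp
      ring
  refine ⟨key, ?_⟩
  intro hw6 hlam ℓ hℓ
  have hc : (2:ℝ) ≤ (w:ℝ)/2 - 1 := by
    have : (6:ℝ) ≤ (w:ℝ) := by exact_mod_cast hw6
    linarith
  have hcoef : 0 < 2 * lam / (w:ℝ) := by positivity
  have hneg : (1 - (w:ℝ)/2) = -((w:ℝ)/2 - 1) := by ring
  have hcpow : (2:ℝ) ≤ ((w:ℝ)/2 - 1) ^ ℓ := by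
    calc (2:ℝ) = 2 ^ 1 := by norm_num
    _ ≤ 2 ^ ℓ := pow_le_pow_right₀ (by norm_num) hℓ
    _ ≤ ((w:ℝ)/2 - 1) ^ ℓ := pow_le_pow_left₀ (by norm_num) hc ℓ
  rcases Nat.even_or_odd ℓ with he | ho
  · have hp : (1 - (w:ℝ)/2) ^ ℓ = ((w:ℝ)/2 - 1) ^ ℓ := by
      rw [hneg, he.neg_pow]
    have hapos : 0 < a ℓ := by
      rw [key ℓ, hp]
      have : (0:ℝ) < 1 + ((w:ℝ)/2 - 1) * ((w:ℝ)/2 - 1) ^ ℓ := by nlinarith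
      positivity
    rw [Real.sign_of_pos hapos, he.neg_one_pow]
  · have hp : (1 - (w:ℝ)/2) ^ ℓ = -(((w:ℝ)/2 - 1) ^ ℓ) := by
      rw [hneg, ho.neg_pow]
    have haneg : a ℓ < 0 := by
      rw [key ℓ, hp]
      have h1 : 1 + ((w:ℝ)/2 - 1) * -(((w:ℝ)/2 - 1) ^ ℓ) < 0 := by nlinarith
      exact mul_neg_of_pos_of_neg hcoef h1
    rw [Real.sign_of_neg haneg, ho.neg_one_pow]
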